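/- A set S ⊆ E is keepable if and only if there exist a linear order ≺ on V and a subset R ⊆ V such that for every edge uv ∈ E with u ≺ v, uv ∈ S if and only if u ∈ R. -/

import Mathlib

def Keepable {V : Type*} (G : SimpleGraph V) (S : Set (Sym2 V)) : Prop :=
  ∃ p : V → ℝ, (∀ v, 0 ≤ p v ∧ p v ≤ 1) ∧
    ∀ u v, G.Adj u v → (s(u, v) ∈ S ↔ p u + p v ≤ 1)

/-- `S` is keepable iff there exist a linear order `≺` on `V` and a set `R ⊆ V`
    such that every edge `uv` with `u ≺ v` belongs to `S` iff `u ∈ R`. -/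
theorem keepable_iff_order {V : Type*} [Fintype V]
    (G : SimpleGraph V) (S : Set (Sym2 V)) (hS : S ⊆ G.edgeSet) :
    Keepable G S ↔
      ∃ (lo : LinearOrder V) (R : Set V),
        ∀ u v, G.Adj u v → lo.lt u v → (s(u, v) ∈ S ↔ u ∈ R) := by
  classical
  constructor
  · rintro ⟨p, hp01, hp⟩
    set d : V → ℝ := fun u => |p u - 1/2| with hd
    set e := Fintype.equivFin V
    set f : V → ℝ ×ₗ (ℝ ×ₗ Fin (Fintype.card V)) :=
      fun u => toLex (-(d u), toLex (p u, e u)) with hf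
    have hinj : Function.Injective f := by
      intro u v huv
      simp only [hf, toLex_inj, Prod.mk.injEq] at huv
      exact e.injective huv.2.2
    refine ⟨LinearOrder.lift' f hinj, {u | p u ≤ 1/2}, ?_⟩
    intro u v hadj hlt
    have hfuv : f u < f v := hlt
    rw [hp u v hadj]
    simp only [Set.mem_setOf_eq]
    simp only [hf, Prod.Lex.lt_iff] at hfuv
    have key : p u + p v ≤ 1 ↔ p u ≤ 1/2 := by
      rcases hfuv with h1 | ⟨h1, h2⟩
      · -- d v < d u
        have hdvu : d v < d u := by
          have h1' : -(d u) < -(d v) := h1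
          linarith
        have habs : |p v - 1/2| < |p u - 1/2| := hdvu
        rcases le_or_gt (p u) (1/2) with hu | hu
        · have heq : |p u - 1/2| = 1/2 - p u := by
            rw [abs_of_nonpos (by linarith)]; ring
          rw [heq] at habs
          have := (abs_lt.mp habs).2
          constructor <;> intro <;> linarith
        · have heq : |p u - 1/2| = p u - 1/2 := by
            rw [abs_of_pos (by linarith)]
          rw [heq] at habs
          have := (abs_lt.mp habs).1
          constructor <;> intro <;> linarith
      · -- d u = d v
        have hdeq : d u = d v := by
          have h1' : -(d u) = -(d v) := h1
          linarith
        rcases h2 with h2 | ⟨h2, _⟩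
        · -- p u < p v
          replace h2 : p u < p v := h2
          have hABS : |p u - 1/2| = |p v - 1/2| := hdeq
          have h3 : p u - 1/2 < 0 := by
            by_contra hcon
            push_neg at hcon
            have hv : 0 ≤ p v - 1/2 := by linarith
            rw [abs_of_nonneg hcon, abs_of_nonneg hv] at hABS
            linarith
          have hv2 : 0 ≤ p v - 1/2 := by
            by_contra hcon
            push_neg at hcon
            rw [abs_of_neg h3, abs_of_neg hcon] at hABS
            linarith
          rw [abs_of_neg h3, abs_of_nonneg hv2] at hABS
          constructor <;> intro <;> linarith
        · -- p u = p v
          replace h2 : p u = p v := h2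
          rw [← h2]
          constructor <;> intro <;> linarith
    exact key
  · rintro ⟨lo, R, h⟩
    letI := lo
    set rank : V → ℕ := fun u => (Finset.univ.filter (fun w => w < u)).card with hrank
    have hrankmono : ∀ {u v : V}, u < v → rank u < rank v := by
      intro u v huv
      apply Finset.card_lt_card
      constructor
      · intro w hw
        simp only [Finset.mem_filter, Finset.mem_univ, true_and] at hw ⊢
        exact lt_trans hw huv
      · intro hcon
        have hmem : u ∈ Finset.univ.filter (fun w => w < v) := by
          simp [huv]
        have := hcon hmem
        simp at this
    set ε : V → ℝ := fun u => (1/2 : ℝ) ^ (rank u + 1) with hε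
    have hεpos : ∀ u, 0 < ε u := fun u => pow_pos (by norm_num) _
    have hεle : ∀ u, ε u ≤ 1/2 := by
      intro u
      calc (1/2 : ℝ) ^ (rank u + 1) ≤ (1/2 : ℝ) ^ 1 :=
            pow_le_pow_of_le_one (by norm_num) (by norm_num) (by omega)
        _ = 1/2 := pow_one _
    have hεmono : ∀ {u v : V}, u < v → ε v < ε u := by
      intro u v huv
      exact pow_lt_pow_right_of_lt_one₀ (by norm_num) (by norm_num)
        (by have := hrankmono huv; omega)
    set p : V → ℝ := fun u => if u ∈ R then 1/2 - ε u else 1/2 + ε u with hpdef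
    have hbounds : ∀ u, 0 ≤ p u ∧ p u ≤ 1 := by
      intro u
      have h1 := hεpos u
      have h2 := hεle u
      by_cases hu : u ∈ R <;> simp only [hpdef, hu, if_true, if_false] <;>
        constructor <;> linarith
    have hplo : ∀ u, 1/2 - ε u ≤ p u := by
      intro u
      have := hεpos u
      by_cases hu : u ∈ R <;> simp only [hpdef, hu, if_true, if_false] <;> linarith
    have hphi : ∀ u, p u ≤ 1/2 + ε u := by
      intro u
      have := hεpos u
      by_cases hu : u ∈ R <;> simp only [hpdef, hu, if_true, if_false] <;> linarith
    have hpin : ∀ u, u ∈ R → p u = 1/2 - ε u := by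
      intro u hu; simp only [hpdef, if_pos hu]
    have hpout : ∀ u, u ∉ R → p u = 1/2 + ε u := by
      intro u hu; simp only [hpdef, if_neg hu]
    refine ⟨p, hbounds, ?_⟩
    have main : ∀ u v, G.Adj u v → u < v → (s(u, v) ∈ S ↔ p u + p v ≤ 1) := by
      intro u v hadj huv
      rw [h u v hadj huv]
      have hεuv := hεmono huv
      by_cases hu : u ∈ R
      · simp only [hu, true_iff]
        have := hphi v
        rw [hpin u hu]
        linarith
      · simp only [hu, false_iff, not_le]
        have := hplo v
        rw [hpout u hu]
        linarith
    intro u v hadj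
    rcases lt_trichotomy u v with huv | huv | huv
    · exact main u v hadj huv
    · exact absurd huv hadj.ne
    · rw [Sym2.eq_swap, add_comm]
      exact main v u hadj.symm huv
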